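/- In the case λ = 0 with additionally h'(t*) < 0, the Newton iteration map n(t) = t - h(t)/h'(t) satisfies t* - n(t) ≤ (D⁻h'(t*) / (-2 h'(t*))) (t* - t)² for all t ∈ [0, t*), where D⁻h'(t*) denotes the left derivative of h' at t*. -/

import Mathlib

open Set

/-- For `λ = 0` with `h'(t*) < 0`, the Newton iteration map satisfies
`t* - n(t) ≤ (D⁻h'(t*)/(-2 h'(t*)))(t* - t)²` on `[0,t*)`, where `D⁻h'(t*)` is the
left derivative of `h' = f'` at `t*`. -/
theorem newton_map_quadratic_rate (R β : ℝ) (hR : 0 < R) (hβ : 0 < β)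
    (f f' : ℝ → ℝ)
    (hder : ∀ t ∈ Ico (0:ℝ) R, HasDerivWithinAt f (f' t) (Ico (0:ℝ) R) t)
    (hf0 : f 0 = 0) (hf'0 : f' 0 = -1)
    (hconv : ConvexOn ℝ (Ico (0:ℝ) R) f')
    (hmono : StrictMonoOn f' (Ico (0:ℝ) R))
    (h : ℝ → ℝ) (hh : h = fun t => β + f t)
    (tstar : ℝ) (htstar : tstar ∈ Ioo (0:ℝ) R) (hz : h tstar = 0)
    (hmin : ∀ t ∈ Ioo (0:ℝ) R, h t = 0 → tstar ≤ t)
    (hneg : ∀ t ∈ Ico (0:ℝ) tstar, f' t < 0)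
    (hstar : f' tstar < 0)
    (D : ℝ) (hD : HasDerivWithinAt f' D (Iio tstar) tstar) :
    ∀ t ∈ Ico (0:ℝ) tstar,
      tstar - (t - h t / f' t) ≤ (D / (-2 * f' tstar)) * (tstar - t) ^ 2 := by
  obtain ⟨hts0, htsR⟩ := htstar
  have htsmem : tstar ∈ Ico (0:ℝ) R := ⟨hts0.le, htsR⟩
  -- slopes to tstar are bounded by the left derivative D
  have hslope : ∀ x ∈ Ico (0:ℝ) tstar, (f' x - f' tstar) / (x - tstar) ≤ D := by
    intro x hx
    have htend := (hasDerivWithinAt_iff_tendsto_slope).1 hD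
    have hsub : Iio tstar \ {tstar} = Iio tstar := by
      ext u; simp +contextual [lt_irrefl, ne_of_lt]
    rw [hsub] at htend
    refine ge_of_tendsto htend ?_
    filter_upwards [Ioo_mem_nhdsLT hx.2]
      with u hu
    · have hux : x ≤ u := hu.1.le
      have humem : u ∈ Ico (0:ℝ) R := ⟨le_trans hx.1 hux, hu.2.trans htsR⟩
      have hxmem : x ∈ Ico (0:ℝ) R := ⟨hx.1, hx.2.trans htsR⟩
      have := hconv.secant_mono htsmem hxmem humem (ne_of_lt hx.2) (ne_of_lt hu.2) hux
      simpa [slope_def_field, div_eq_div_iff] using this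
  -- pointwise bound: f' s - f' t ≤ D * (s - t) for t ≤ s < tstar
  have hkey : ∀ t ∈ Ico (0:ℝ) tstar, ∀ s ∈ Ico t tstar, f' s - f' t ≤ D * (s - t) := by
    intro t ht s hs
    rcases eq_or_lt_of_le hs.1 with rfl | hts
    · simp
    have hsmem : s ∈ Ico (0:ℝ) R := ⟨le_trans ht.1 hs.1, hs.2.trans htsR⟩
    have htmem : t ∈ Ico (0:ℝ) R := ⟨ht.1, ht.2.trans htsR⟩
    have h1 := hconv.slope_mono_adjacent htmem htsmem hts hs.2
    have h2 := hslope s ⟨le_trans ht.1 hs.1, hs.2⟩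
    have h3 : (f' s - f' tstar) / (s - tstar) = (f' tstar - f' s) / (tstar - s) := by
      rw [← neg_div_neg_eq]; ring_nf
    rw [h3] at h2
    have hst : 0 < s - t := sub_pos.2 hts
    have := (div_le_iff₀ hst).1 (h1.trans h2)
    linarith
  intro t ht
  have htmem : t ∈ Ico (0:ℝ) R := ⟨ht.1, ht.2.trans htsR⟩
  have hc : 0 < -f' t := by linarith [hneg t ht]
  have hcs : 0 < -f' tstar := by linarith
  have hcc : f' t < f' tstar := hmono htmem htsmem ht.2
  have hIcc : Icc t tstar ⊆ Ico (0:ℝ) R := fun s hs => ⟨le_trans ht.1 hs.1, lt_of_le_of_lt hs.2 htsR⟩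
  have hcontf : ContinuousOn f (Icc t tstar) := fun s hs =>
    ((hder s (hIcc hs)).continuousWithinAt).mono hIcc
  have hderiv : ∀ s ∈ Ioo t tstar, HasDerivAt f (f' s) s := by
    intro s hs
    have hsmem : s ∈ Ico (0:ℝ) R := hIcc ⟨hs.1.le, hs.2.le⟩
    exact (hder s hsmem).hasDerivAt
      (Ico_mem_nhds (lt_of_le_of_lt ht.1 hs.1) (hs.2.trans htsR))
  -- A := f tstar - f t - f' t * (tstar - t)
  -- upper bound on A via antitone auxiliary function
  have hA1 : f tstar - f t - f' t * (tstar - t) ≤ D / 2 * (tstar - t) ^ 2 := by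
    set g : ℝ → ℝ := fun s => f s - f' t * s - D / 2 * (s - t) ^ 2 with hg
    have hgd : ∀ s ∈ Ioo t tstar, HasDerivAt g (f' s - f' t - D * (s - t)) s := by
      intro s hs
      have h1 : HasDerivAt (fun s : ℝ => (s - t) ^ 2) (2 * (s - t)) s := by
        have := ((hasDerivAt_id s).sub_const t).pow 2
        simp at this
        exact this
      have := ((hderiv s hs).sub ((hasDerivAt_id s).const_mul (f' t))).sub
        (h1.const_mul (D / 2))
      rw [show (f' s - f' t - D * (s - t)) = f' s - f' t * 1 - D / 2 * (2 * (s - t)) by ring]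
      exact this
    have hanti : AntitoneOn g (Icc t tstar) := by
      apply antitoneOn_of_deriv_nonpos (convex_Icc t tstar)
      · apply ContinuousOn.sub (ContinuousOn.sub hcontf (by fun_prop)) (by fun_prop)
      · intro s hs
        rw [interior_Icc] at hs
        exact ((hgd s hs).differentiableAt).differentiableWithinAt
      · intro s hs
        rw [interior_Icc] at hs
        rw [(hgd s hs).deriv]
        have := hkey t ht s ⟨hs.1.le, hs.2⟩
        linarith
    have := hanti (left_mem_Icc.2 ht.2.le) (right_mem_Icc.2 ht.2.le) ht.2.le
    simp only [hg] at this
    nlinarith [this]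
  -- lower bound: A ≥ 0 via monotone auxiliary function
  have hA0 : 0 ≤ f tstar - f t - f' t * (tstar - t) := by
    set g : ℝ → ℝ := fun s => f s - f' t * s with hg
    have hgd : ∀ s ∈ Ioo t tstar, HasDerivAt g (f' s - f' t) s := by
      intro s hs
      have := (hderiv s hs).sub ((hasDerivAt_id s).const_mul (f' t))
      simp only [mul_one] at this
      exact this
    have hmon : MonotoneOn g (Icc t tstar) := by
      apply monotoneOn_of_deriv_nonneg (convex_Icc t tstar)
      · exact ContinuousOn.sub hcontf (by fun_prop)
      · intro s hs
        rw [interior_Icc] at hs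
        exact ((hgd s hs).differentiableAt).differentiableWithinAt
      · intro s hs
        rw [interior_Icc] at hs
        rw [(hgd s hs).deriv]
        have : f' t < f' s := hmono htmem (hIcc ⟨hs.1.le, hs.2.le⟩) hs.1
        linarith
    have := hmon (left_mem_Icc.2 ht.2.le) (right_mem_Icc.2 ht.2.le) ht.2.le
    simp only [hg] at this
    nlinarith [this]
  -- final arithmetic
  have hfts : f tstar = -β := by
    have : β + f tstar = 0 := by rw [hh] at hz; exact hz
    linarith
  have hE : (0:ℝ) < (tstar - t) ^ 2 := pow_pos (sub_pos.2 ht.2) 2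
  have hD0 : 0 ≤ D := by nlinarith
  have e1 : tstar - (t - h t / f' t) =
      (f tstar - f t - f' t * (tstar - t)) / (-f' t) := by
    have hft0 : f' t ≠ 0 := by linarith
    rw [hh, hfts]
    field_simp
    ring
  rw [e1, div_le_iff₀ hc]
  have hq : D / (-2 * f' tstar) * (2 * (-f' tstar)) = D := by
    field_simp
    rw [mul_div_assoc, div_self hstar.ne, mul_one]
  nlinarith [mul_nonneg (mul_nonneg (div_nonneg hD0 (by linarith : (0:ℝ) ≤ -2 * f' tstar)) hE.le)
      (by linarith : (0:ℝ) ≤ f' tstar - f' t), hA1, hA0, hq]
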